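/- arXiv:1409.0309 — 3 statements merged into one kernel-verified Lean document; each statement's English description precedes it below -/
import Mathlib

section
/- Let the machine M be FTA-compliant with the election architectural specification (EE, C_EE), and let v be a voter. For every voter permutation P with P(v) = v, if π(q) = P(π(p)), then for all α ∈ A*, M,π,α ⊨ ¬K_v ¬p → ¬K_v ¬q. -/
structure Machine (S A D O : Type) where
  s0 : S
  step : S → A → S
  dom : A → D
  obs : D → S → O

namespace Machine

def run {S A D O : Type} (M : Machine S A D O) (α : List A) : S :=
  α.foldl M.step M.s0

end Machine
/-- Elements of a view: actions or (group) observations. -/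
inductive VE (A O' : Type) where
  | act : A → VE A O'
  | obs : O' → VE A O'

open Classical in
/-- Absorptive concatenation: `σ ∘ x` is `σ` if `x` equals the last element of `σ`,
and `σ ++ [x]` otherwise. -/
noncomputable def absorb {X : Type} (σ : List X) (x : X) : List X :=
  if σ.getLast? = some x then σ else σ ++ [x]

open Classical in
/-- View of a group `G`, computed on the reversed action sequence. -/
noncomputable def viewR {S A D O : Type} (M : Machine S A D O) (G : Set D) :
    List A → List (VE A (G → O))
  | [] => [VE.obs (fun u : G => M.obs u.1 M.s0)]
  | a :: ρ =>
    let o : VE A (G → O) := VE.obs (fun u : G => M.obs u.1 (M.run ((a :: ρ).reverse)))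
    if M.dom a ∈ G then viewR M G ρ ++ [VE.act a, o] else absorb (viewR M G ρ) o

/-- The view of group `G` of the action sequence `α`. -/
noncomputable def view {S A D O : Type} (M : Machine S A D O) (G : Set D) (α : List A) :
    List (VE A (G → O)) :=
  viewR M G α.reverse
/-- Formulas of the epistemic logic (without distributed knowledge). -/
inductive Formula (PC D : Type) where
  | tru : Formula PC D
  | atom : PC → Formula PC D
  | neg : Formula PC D → Formula PC D
  | conj : Formula PC D → Formula PC D → Formula PC D
  | know : Set D → Formula PC D → Formula PC D

/-- Satisfaction relation `M,π,α ⊨ φ`. -/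
def sat {S A D O PC : Type} (M : Machine S A D O) (π : PC → Set (List A)) :
    List A → Formula PC D → Prop
  | _, .tru => True
  | α, .atom p => α ∈ π p
  | α, .neg φ => ¬ sat M π α φ
  | α, .conj φ ψ => sat M π α φ ∧ sat M π α ψ
  | α, .know G φ => ∀ α', view M G α' = view M G α → sat M π α' φ
/-- An extended architecture: `edge u v = none` means no edge, `edge u v = some none`
means an edge labelled `⊤`, and `edge u v = some (some f)` means an edge labelled by
the filter-function name `f`.  There is at most one label per ordered pair by
construction, and the relation is reflexive with label `⊤`. -/
structure ExtArch (D L : Type) where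
  edge : D → D → Option (Option L)
  refl : ∀ u, edge u u = some none

/-- Values of the `tf` function and of filter-function interpretations:
`eps` is the empty value ε, `base v` an arbitrary basic value, and
`pair σ a` the pair `(σ, a)` of a `tf` value and an action. -/
inductive TFVal (A V : Type) where
  | eps : TFVal A V
  | base : V → TFVal A V
  | pair : List (TFVal A V) → A → TFVal A V

/-- `σ ⌢ x`: appends `x` as a single new last element unless `x = ε`. -/
def snoc' {A V : Type} (σ : List (TFVal A V)) : TFVal A V → List (TFVal A V)
  | .eps => σ
  | x => σ ++ [x]

/-- `tf`, computed on the reversed action sequence. -/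
def tfR {A D L V : Type} (Arch : ExtArch D L) (dm : A → D)
    (I : L → List A → A → TFVal A V) : List A → D → List (TFVal A V)
  | [], _ => []
  | a :: ρ, u =>
    match Arch.edge (dm a) u with
    | none => tfR Arch dm I ρ u
    | some none => tfR Arch dm I ρ u ++ [TFVal.pair (tfR Arch dm I ρ (dm a)) a]
    | some (some f) => snoc' (tfR Arch dm I ρ u) (I f ρ.reverse a)

/-- `tf Arch dm I α u` : maximal information domain `u` is permitted to have after `α`. -/
def tf {A D L V : Type} (Arch : ExtArch D L) (dm : A → D)
    (I : L → List A → A → TFVal A V) (α : List A) (u : D) : List (TFVal A V) :=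
  tfR Arch dm I α.reverse u

/-- `inF Arch dm I α a u` : the information `in_{dom(a),u}(α, a)` transmitted to `u`
when action `a` is performed after `α`. -/
def inF {A D L V : Type} (Arch : ExtArch D L) (dm : A → D)
    (I : L → List A → A → TFVal A V) (α : List A) (a : A) (u : D) : TFVal A V :=
  match Arch.edge (dm a) u with
  | none => TFVal.eps
  | some none => TFVal.pair (tf Arch dm I α (dm a)) a
  | some (some f) => I f α a
/-- FTA-compliance of a machine with an interpreted extended architecture
(whose actions, domains and domain function are those of the machine). -/
def FTACompliant {S A D O L V : Type} (M : Machine S A D O) (Arch : ExtArch D L)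
    (I : L → List A → A → TFVal A V) : Prop :=
  ∀ (u : D) (α α' : List A), tf Arch M.dom I α u = tf Arch M.dom I α' u →
    M.obs u (M.run α) = M.obs u (M.run α')
/-- Domains of the election architecture: the voters and the election
authority. -/
inductive EEDom (Vt : Type) where
  | voter : Vt → EEDom Vt
  | auth : EEDom Vt

open Classical in
/-- The election extended architecture: reflexive `⊤`-edges, `v ↝_⊤ ElecAuth`
for each voter `v`, and `ElecAuth ↝_results v` for each voter `v` (the label
set is `Unit`, with `()` standing for `results`). -/
noncomputable def EEArch (Vt : Type) : ExtArch (EEDom Vt) Unit where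
  edge u v :=
    match u, v with
    | .voter a, .voter b => if a = b then some none else none
    | .voter _, .auth => some none
    | .auth, .voter _ => some (some ())
    | .auth, .auth => some none
  refl u := by cases u <;> simp

open Classical in
/-- The action of a voter permutation `P` on a single action: an action of the
form `act t v` (type `t` performed by voter `v`) is mapped to `act t (P v)`;
all other actions are fixed. -/
noncomputable def permA {Vt AV A : Type} (act : AV → Vt → A) (P : Equiv.Perm Vt)
    (a : A) : A :=
  if h : ∃ v : Vt, ∃ t : AV, act t v = a then
    act h.choose_spec.choose (P h.choose)
  else a

/-- The action of a voter permutation on a sequence of actions. -/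
noncomputable def permSeq {Vt AV A : Type} (act : AV → Vt → A) (P : Equiv.Perm Vt)
    (α : List A) : List A :=
  α.map (permA act P)

section Aux

variable {S A O V Vt AV : Type} (M : Machine S A (EEDom Vt) O)
  (act : AV → Vt → A) (P : Equiv.Perm Vt)

lemma permA_act (hinj : ∀ (t t' : AV) (v v' : Vt), act t v = act t' v' → t = t' ∧ v = v')
    (t : AV) (w : Vt) : permA act P (act t w) = act t (P w) := by
  unfold permA
  have h : ∃ v : Vt, ∃ t' : AV, act t' v = act t w := ⟨w, t, rfl⟩
  rw [dif_pos h]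
  obtain ⟨ht, hw⟩ := hinj _ _ _ _ h.choose_spec.choose_spec
  rw [ht, hw]

lemma perm_cases
    (hdom : ∀ (t : AV) (v : Vt), M.dom (act t v) = EEDom.voter v)
    (hsurj : ∀ (a : A) (v : Vt), M.dom a = EEDom.voter v → ∃ t : AV, act t v = a)
    (hinj : ∀ (t t' : AV) (v v' : Vt), act t v = act t' v' → t = t' ∧ v = v')
    (a : A) :
    (M.dom a = EEDom.auth ∧ permA act P a = a) ∨
    (∃ t w, a = act t w ∧ permA act P a = act t (P w) ∧ M.dom a = EEDom.voter w
      ∧ M.dom (permA act P a) = EEDom.voter (P w)) := by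
  rcases hd : M.dom a with w | _
  · right
    obtain ⟨t, ht⟩ := hsurj a w hd
    have h1 : permA act P a = act t (P w) := by rw [← ht, permA_act act P hinj]
    exact ⟨t, w, ht.symm, h1, rfl, by rw [h1, hdom]⟩
  · left
    refine ⟨rfl, ?_⟩
    unfold permA
    rw [dif_neg]
    rintro ⟨w, t, ht⟩
    rw [← ht, hdom] at hd
    cases hd

lemma edge_av (v : Vt) :
    (EEArch Vt).edge EEDom.auth (EEDom.voter v) = some (some ()) := rfl

lemma edge_vv (v : Vt) :
    (EEArch Vt).edge (EEDom.voter v) (EEDom.voter v) = some none := by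
  simp [EEArch]

lemma edge_wv {w v : Vt} (h : w ≠ v) :
    (EEArch Vt).edge (EEDom.voter w) (EEDom.voter v) = none := by
  simp [EEArch, h]

variable (hdom : ∀ (t : AV) (v : Vt), M.dom (act t v) = EEDom.voter v)
  (hsurj : ∀ (a : A) (v : Vt), M.dom a = EEDom.voter v → ∃ t : AV, act t v = a)
  (hinj : ∀ (t t' : AV) (v v' : Vt), act t v = act t' v' → t = t' ∧ v = v')
  (I : Unit → List A → A → TFVal A V)
  (hA1 : ∀ (P : Equiv.Perm Vt) (α : List A) (a : A), M.dom a = EEDom.auth →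
      I () α a = I () (permSeq act P α) a)
  (v : Vt) (hPv : P v = v)

include hdom hsurj hinj hA1 hPv in
lemma tfR_perm : ∀ ρ : List A,
    tfR (EEArch Vt) M.dom I (List.map (permA act P) ρ) (EEDom.voter v)
      = tfR (EEArch Vt) M.dom I ρ (EEDom.voter v) := by
  intro ρ
  induction ρ with
  | nil => rfl
  | cons a ρ ih =>
    rcases perm_cases M act P hdom hsurj hinj a with ⟨hd, hpa⟩ | ⟨t, w, ha, hpa, hd, hpd⟩
    · simp only [List.map_cons, tfR, hpa, hd, edge_av]
      rw [ih]
      congr 1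
      rw [← List.map_reverse]
      exact (hA1 P ρ.reverse a hd).symm
    · by_cases hw : w = v
      · have hd' : M.dom a = EEDom.voter v := hw ▸ hd
        have hpaa : permA act P a = a := by rw [hpa, hw, hPv, ha, hw]
        simp only [List.map_cons, tfR, hpaa, hd', edge_vv, ih]
      · have hPw : P w ≠ v := fun h => hw (P.injective (by rw [h, hPv]))
        simp only [List.map_cons, tfR, hd, hpd, edge_wv hw, edge_wv hPw]
        exact ih

include hdom hsurj hinj hA1 hPv in
lemma obs_perm (hFTA : FTACompliant M (EEArch Vt) I) (β : List A) :
    M.obs (EEDom.voter v) (M.run (permSeq act P β)) = M.obs (EEDom.voter v) (M.run β) := by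
  apply hFTA
  unfold tf permSeq
  rw [← List.map_reverse]
  exact tfR_perm M act P hdom hsurj hinj I hA1 v hPv β.reverse

include hdom hsurj hinj hA1 hPv in
lemma viewR_perm (hFTA : FTACompliant M (EEArch Vt) I) : ∀ ρ : List A,
    viewR M {EEDom.voter v} (List.map (permA act P) ρ) = viewR M {EEDom.voter v} ρ := by
  intro ρ
  induction ρ with
  | nil => rfl
  | cons a ρ ih =>
    have hobs : (fun u : ({EEDom.voter v} : Set (EEDom Vt)) =>
          M.obs u.1 (M.run ((permA act P a :: List.map (permA act P) ρ).reverse)))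
        = (fun u : ({EEDom.voter v} : Set (EEDom Vt)) =>
          M.obs u.1 (M.run ((a :: ρ).reverse))) := by
      funext u
      have hu : u.1 = EEDom.voter v := u.2
      have hrev : (permA act P a :: List.map (permA act P) ρ).reverse
          = permSeq act P ((a :: ρ).reverse) := by
        unfold permSeq
        rw [List.map_reverse, List.map_cons]
      rw [hu, hrev, obs_perm M act P hdom hsurj hinj I hA1 v hPv hFTA]
    rcases perm_cases M act P hdom hsurj hinj a with ⟨hd, hpa⟩ | ⟨t, w, ha, hpa, hd, hpd⟩
    · have hnmem : M.dom a ∉ ({EEDom.voter v} : Set (EEDom Vt)) := by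
        rw [hd]; exact fun h => by cases (Set.mem_singleton_iff.mp h)
      have hn1 : M.dom (permA act P a) ∉ ({EEDom.voter v} : Set (EEDom Vt)) := by
        rw [hpa]; exact hnmem
      simp only [viewR, List.map_cons, if_neg hn1, if_neg hnmem]
      rw [ih, hobs]
    · by_cases hw : w = v
      · have hd' : M.dom a = EEDom.voter v := hw ▸ hd
        have hpaa : permA act P a = a := by rw [hpa, hw, hPv, ha, hw]
        have hmem : M.dom a ∈ ({EEDom.voter v} : Set (EEDom Vt)) := by
          rw [hd']; exact rfl
        have hmem' : M.dom (permA act P a) ∈ ({EEDom.voter v} : Set (EEDom Vt)) := by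
          rw [hpaa]; exact hmem
        simp only [viewR, List.map_cons, if_pos hmem', if_pos hmem]
        rw [ih, hobs, hpaa]
      · have hPw : P w ≠ v := fun h => hw (P.injective (by rw [h, hPv]))
        have hn1 : M.dom (permA act P a) ∉ ({EEDom.voter v} : Set (EEDom Vt)) := by
          rw [hpd]
          exact fun h => hPw (EEDom.voter.injEq _ _ ▸ Set.mem_singleton_iff.mp h)
        have hn2 : M.dom a ∉ ({EEDom.voter v} : Set (EEDom Vt)) := by
          rw [hd]
          exact fun h => hw (EEDom.voter.injEq _ _ ▸ Set.mem_singleton_iff.mp h)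
        simp only [viewR, List.map_cons, if_neg hn1, if_neg hn2]
        rw [ih, hobs]

include hdom hsurj hinj hA1 hPv in
lemma view_perm (hFTA : FTACompliant M (EEArch Vt) I) (α : List A) :
    view M {EEDom.voter v} (permSeq act P α) = view M {EEDom.voter v} α := by
  unfold view permSeq
  rw [← List.map_reverse]
  exact viewR_perm M act P hdom hsurj hinj I hA1 v hPv hFTA α.reverse

end Aux

/-- if `M` is FTA-compliant with `(EE, C_EE)`, `v` is a voter,
`P` a voter permutation with `P(v) = v`, and `π(q) = P(π(p))`, then
`M,π,α ⊨ ¬K_v ¬p → ¬K_v ¬q` for all `α`. -/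
theorem statement13 {S A O V Vt AV PC : Type} (M : Machine S A (EEDom Vt) O)
    (act : AV → Vt → A)
    (hdom : ∀ (t : AV) (v : Vt), M.dom (act t v) = EEDom.voter v)
    (hsurj : ∀ (a : A) (v : Vt), M.dom a = EEDom.voter v → ∃ t : AV, act t v = a)
    (hinj : ∀ (t t' : AV) (v v' : Vt), act t v = act t' v' → t = t' ∧ v = v')
    (I : Unit → List A → A → TFVal A V)
    (hA1 : ∀ (P : Equiv.Perm Vt) (α : List A) (a : A), M.dom a = EEDom.auth →
      I () α a = I () (permSeq act P α) a)
    (hFTA : FTACompliant M (EEArch Vt) I)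
    (v : Vt) (P : Equiv.Perm Vt) (hPv : P v = v)
    (π : PC → Set (List A)) (p q : PC)
    (hq : π q = permSeq act P '' π p) :
    ∀ α : List A,
      sat M π α (Formula.neg
        (Formula.know {EEDom.voter v} (Formula.neg (Formula.atom p)))) →
      sat M π α (Formula.neg
        (Formula.know {EEDom.voter v} (Formula.neg (Formula.atom q)))) := by
  intro α h
  simp only [sat] at h ⊢
  push_neg at h ⊢
  obtain ⟨α', hview, hp⟩ := h
  refine ⟨permSeq act P α', ?_, ?_⟩
  · rw [view_perm M act P hdom hsurj hinj I hA1 v hPv hFTA, hview]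
  · rw [hq]
    exact ⟨α', hp, rfl⟩
end

section
/- Suppose 𝒜ℐ₁ and 𝒜ℐ₂ are interpreted extended architectures such that 𝒜ℐ₁ ≼_r 𝒜ℐ₂. Let π be an interpretation for these architectures, and let φ be a formula for the domains of 𝒜ℐ₂ (not containing distributed knowledge operators). If 𝒜ℐ₂, π ⊨ φ, then 𝒜ℐ₁, π ⊨ r⁻¹(φ). -/
/-- `r` is a semantic refinement mapping from `(A₁, dm₁, I₁)` to `(A₂, dm₂, I₂)`. -/
def SemRef {A D₁ D₂ L₁ L₂ V₁ V₂ : Type} (A₁ : ExtArch D₁ L₁) (dm₁ : A → D₁)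
    (I₁ : L₁ → List A → A → TFVal A V₁) (A₂ : ExtArch D₂ L₂) (dm₂ : A → D₂)
    (I₂ : L₂ → List A → A → TFVal A V₂) (r : D₁ → D₂) : Prop :=
  Function.Surjective r ∧ dm₂ = r ∘ dm₁ ∧
    ∀ (u : D₁) (α β : List A),
      tf A₂ dm₂ I₂ α (r u) = tf A₂ dm₂ I₂ β (r u) →
        tf A₁ dm₁ I₁ α u = tf A₁ dm₁ I₁ β u

/-- `r⁻¹(φ)`: replace every group `G` in a knowledge operator by `r⁻¹(G)`. -/
def rinv {PC D₁ D₂ : Type} (r : D₁ → D₂) : Formula PC D₂ → Formula PC D₁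
  | .tru => .tru
  | .atom p => .atom p
  | .neg φ => .neg (rinv r φ)
  | .conj φ ψ => .conj (rinv r φ) (rinv r ψ)
  | .know G φ => .know (r ⁻¹' G) (rinv r φ)

/-- `𝒜ℐ, π ⊨ φ`: every machine FTA-compliant with the interpreted architecture
satisfies `φ` at every sequence of actions. -/
def ArchValid {A D L V PC : Type} (Arch : ExtArch D L) (dm : A → D)
    (I : L → List A → A → TFVal A V) (π : PC → Set (List A))
    (φ : Formula PC D) : Prop :=
  ∀ (S O : Type) (M : Machine S A D O), M.dom = dm → FTACompliant M Arch I →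
    ∀ α : List A, sat M π α φ

open Classical in
/-- The lifted machine `r(M)`: domains are `D₂`, and the observation of `u ∈ D₂`
is the tuple of observations of all `v ∈ r⁻¹(u)`. -/
noncomputable def liftMach {S A D₁ D₂ O : Type} (r : D₁ → D₂) (M : Machine S A D₁ O) :
    Machine S A D₂ (D₁ → Option O) where
  s0 := M.s0
  step := M.step
  dom := r ∘ M.dom
  obs := fun u s v => if r v = u then some (M.obs v s) else none

open Classical in
/-- Translation of group observations along `r`. -/
noncomputable def Fmap {D₁ D₂ O : Type} (r : D₁ → D₂) (G : Set D₂) :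
    (↥(r ⁻¹' G) → O) → (↥G → D₁ → Option O) :=
  fun g u v => if h : r v = u.1 then some (g ⟨v, by simp [Set.mem_preimage, h, u.2]⟩)
    else none

lemma Fmap_inj {D₁ D₂ O : Type} (r : D₁ → D₂) (G : Set D₂) :
    Function.Injective (Fmap r G (O := O)) := by
  intro g g' hgg
  funext v
  obtain ⟨v, hv⟩ := v
  have hv' : r v ∈ G := hv
  simpa [Fmap] using congrFun (congrFun hgg ⟨r v, hv'⟩) v

/-- Map on view elements. -/
def mapVE {A O₁ O₂ : Type} (f : O₁ → O₂) : VE A O₁ → VE A O₂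
  | .act a => .act a
  | .obs o => .obs (f o)

lemma mapVE_inj {A O₁ O₂ : Type} {f : O₁ → O₂} (hf : Function.Injective f) :
    Function.Injective (mapVE (A := A) f) := by
  intro x y hxy
  cases x <;> cases y <;> simp_all [mapVE]
  exact hf hxy

lemma absorb_map {X Y : Type} {f : X → Y} (hf : Function.Injective f)
    (σ : List X) (x : X) : absorb (σ.map f) (f x) = (absorb σ x).map f := by
  unfold absorb
  rw [List.getLast?_map]
  rcases h : σ.getLast? with _ | y
  · simp
  · by_cases hxy : y = x
    · simp [hxy]
    · have : ¬ f y = f x := fun hc => hxy (hf hc)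
      simp [hxy, this]

lemma liftMach_run {S A D₁ D₂ O : Type} (r : D₁ → D₂) (M : Machine S A D₁ O)
    (α : List A) : (liftMach r M).run α = M.run α := rfl

lemma liftMach_obs_eq {S A D₁ D₂ O : Type} (r : D₁ → D₂) (M : Machine S A D₁ O)
    (G : Set D₂) (s : S) :
    (fun u : ↥G => (liftMach r M).obs u.1 s)
      = Fmap r G (fun v : ↥(r ⁻¹' G) => M.obs v.1 s) := by
  funext u v
  by_cases hv : r v = u.1 <;> simp [liftMach, Fmap, hv]

lemma viewR_lift {S A D₁ D₂ O : Type} (r : D₁ → D₂) (M : Machine S A D₁ O)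
    (G : Set D₂) (ρ : List A) :
    viewR (liftMach r M) G ρ = (viewR M (r ⁻¹' G) ρ).map (mapVE (Fmap r G)) := by
  induction ρ with
  | nil =>
      simp only [viewR, List.map_cons, List.map_nil, mapVE]
      rw [liftMach_obs_eq]
      rfl
  | cons a ρ ih =>
      have hmemiff : ((liftMach r M).dom a ∈ G) = (M.dom a ∈ r ⁻¹' G) := by
        simp [liftMach, Set.mem_preimage]
      by_cases hmem : M.dom a ∈ r ⁻¹' G
      · rw [viewR, viewR, if_pos (hmemiff ▸ hmem), if_pos hmem, ih]
        simp only [List.map_append, List.map_cons, List.map_nil, mapVE]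
        rw [liftMach_run, liftMach_obs_eq]
      · rw [viewR, viewR, if_neg (hmemiff ▸ hmem), if_neg hmem, ih]
        have := liftMach_obs_eq r M G (M.run ((a :: ρ).reverse))
        rw [liftMach_run, this]
        exact absorb_map (mapVE_inj (Fmap_inj r G)) (viewR M (r ⁻¹' G) ρ)
          (VE.obs fun u => M.obs u.1 (M.run (a :: ρ).reverse))

lemma view_lift_iff {S A D₁ D₂ O : Type} (r : D₁ → D₂) (M : Machine S A D₁ O)
    (G : Set D₂) (α α' : List A) :
    view (liftMach r M) G α' = view (liftMach r M) G α ↔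
      view M (r ⁻¹' G) α' = view M (r ⁻¹' G) α := by
  unfold view
  rw [viewR_lift, viewR_lift]
  constructor
  · intro hh
    exact List.map_injective_iff.mpr (mapVE_inj (Fmap_inj r G)) hh
  · intro hh; rw [hh]

lemma sat_lift {S A D₁ D₂ O PC : Type} (r : D₁ → D₂) (M : Machine S A D₁ O)
    (π : PC → Set (List A)) (φ : Formula PC D₂) (α : List A) :
    sat (liftMach r M) π α φ ↔ sat M π α (rinv r φ) := by
  induction φ generalizing α with
  | tru => simp [sat, rinv]
  | atom p => simp [sat, rinv]
  | neg φ ih => simp [sat, rinv, ih]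
  | conj φ ψ ih₁ ih₂ => simp [sat, rinv, ih₁, ih₂]
  | know G φ ih =>
      simp only [sat, rinv]
      constructor
      · intro hk α' hv
        exact (ih α').mp (hk α' ((view_lift_iff r M G α α').mpr hv))
      · intro hk α' hv
        exact (ih α').mpr (hk α' ((view_lift_iff r M G α α').mp hv))

/-- if `𝒜ℐ₁ ≼_r 𝒜ℐ₂` and `𝒜ℐ₂, π ⊨ φ`, then
`𝒜ℐ₁, π ⊨ r⁻¹(φ)`. -/
theorem statement18 {A D₁ D₂ L₁ L₂ V₁ V₂ PC : Type}
    (A₁ : ExtArch D₁ L₁) (dm₁ : A → D₁) (I₁ : L₁ → List A → A → TFVal A V₁)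
    (A₂ : ExtArch D₂ L₂) (dm₂ : A → D₂) (I₂ : L₂ → List A → A → TFVal A V₂)
    (r : D₁ → D₂) (href : SemRef A₁ dm₁ I₁ A₂ dm₂ I₂ r)
    (π : PC → Set (List A)) (φ : Formula PC D₂)
    (h : ArchValid A₂ dm₂ I₂ π φ) :
    ArchValid A₁ dm₁ I₁ π (rinv r φ) := by
  intro S O M hdom hcomp α
  obtain ⟨-, hdm, htf⟩ := href
  have hdom2 : (liftMach r M).dom = dm₂ := by
    funext a; simp [liftMach, hdom, hdm]
  have hcomp2 : FTACompliant (liftMach r M) A₂ I₂ := by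
    intro u α α' htfe
    rw [hdom2] at htfe
    funext v
    by_cases hv : r v = u
    · subst hv
      have h1 : tf A₁ dm₁ I₁ α v = tf A₁ dm₁ I₁ α' v := htf v α α' htfe
      simp only [liftMach, liftMach_run, if_pos rfl, if_true, Option.some.injEq]
      exact hcomp v α α' (by rw [hdom]; exact h1)
    · simp [liftMach, hv]
  exact (sat_lift r M π φ α).mp (h S (D₁ → Option O) (liftMach r M) hdom2 hcomp2 α)
end

section
/- Let 𝒜ℐ be a strongly non-conflating interpreted extended architecture. Suppose M is a machine with structured state, with the same actions, domains and domain function as 𝒜ℐ, satisfying conditions RM1, RM2, RM3, AOI′, I1 and I2 with respect to 𝒜ℐ. Then M is FTA-compliant with 𝒜ℐ. -/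
/-- A strongly non-conflating interpreted architecture. -/
def StronglyNonConflating {A D L V : Type} (Arch : ExtArch D L) (dm : A → D)
    (I : L → List A → A → TFVal A V) : Prop :=
  ∀ (u v w : D) (f : L), Arch.edge u w = some (some f) → Arch.edge v w = some none →
    ∀ (a b : A), dm a = u → dm b = v →
      ∀ (α β : List A), I f α a ≠ TFVal.pair (tf Arch dm I β v) b

/-- A compatible interpretation: `𝕀(f)` is `tf_u`-compatible for every edge
`u ↝_f v` with `f ∈ L`. -/
def Compatible {A D L V : Type} (Arch : ExtArch D L) (dm : A → D)
    (I : L → List A → A → TFVal A V) : Prop :=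
  ∀ (u v : D) (f : L), Arch.edge u v = some (some f) →
    ∀ (α β : List A), tf Arch dm I α u = tf Arch dm I β u →
      ∀ (a : A), dm a = u → I f α a = I f β a

/-- A machine with structured state: a machine together with objects, values,
a contents function and access-control functions `observe` and `alter`. -/
structure ACMachine (S A D O Obj Val : Type) extends Machine S A D O where
  contents : S → Obj → Val
  observe : D → Set Obj
  alter : D → Set Obj


lemma snoc'_ne {A V : Type} (σ : List (TFVal A V)) {x : TFVal A V} (hx : x ≠ .eps) :
    snoc' σ x = σ ++ [x] := by
  cases x <;> simp_all [snoc']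

lemma snoc'_eps {A V : Type} (σ : List (TFVal A V)) : snoc' σ .eps = σ := rfl

lemma tf_concat {A D L V : Type} (Arch : ExtArch D L) (dm : A → D)
    (I : L → List A → A → TFVal A V) (α : List A) (a : A) (u : D) :
    tf Arch dm I (α ++ [a]) u = snoc' (tf Arch dm I α u) (inF Arch dm I α a u) := by
  simp only [tf, inF, List.reverse_append, List.reverse_cons, List.reverse_nil,
    List.nil_append, List.singleton_append]
  rw [tfR]
  cases h : Arch.edge (dm a) u with
  | none => simp [h, snoc'_eps]
  | some o =>
    cases o with
    | none => simp [h, snoc', tf]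
    | some f => simp [h, tf]

/-- if `𝒜ℐ` is strongly non-conflating (the interpretation being
compatible) and the machine with structured state `M` satisfies RM1–RM3, AOI′,
I1 and I2 with respect to `𝒜ℐ`, then `M` is FTA-compliant with `𝒜ℐ`. -/
theorem statement19 {S A D O Obj Val L V : Type} (M : ACMachine S A D O Obj Val)
    (Arch : ExtArch D L) (I : L → List A → A → TFVal A V)
    (hcomp : Compatible Arch M.dom I)
    (hsnc : StronglyNonConflating Arch M.dom I)
    -- RM1
    (hRM1 : ∀ (u : D) (s t : S),
      (∀ x ∈ M.observe u, M.contents s x = M.contents t x) →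
      M.obs u s = M.obs u t)
    -- RM2
    (hRM2 : ∀ (a : A) (s t : S) (x : Obj), x ∈ M.alter (M.dom a) →
      (∀ y ∈ M.observe (M.dom a), M.contents s y = M.contents t y) →
      M.contents s x = M.contents t x →
      M.contents (M.step s a) x = M.contents (M.step t a) x)
    -- RM3
    (hRM3 : ∀ (a : A) (s : S) (x : Obj), x ∉ M.alter (M.dom a) →
      M.contents s x = M.contents (M.step s a) x)
    -- AOI′
    (hAOI : ∀ u v : D, (M.alter u ∩ M.observe v).Nonempty →
      (Arch.edge u v).isSome = true)
    -- I1
    (hI1 : ∀ (α : List A) (a : A) (u : D) (f : L) (x : Obj),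
      Arch.edge (M.dom a) u = some (some f) → I f α a = TFVal.eps →
      x ∈ M.observe u ∩ M.alter (M.dom a) →
      M.contents (Machine.run M.toMachine (α ++ [a])) x =
        M.contents (Machine.run M.toMachine α) x)
    -- I2
    (hI2 : ∀ (α β : List A) (a b : A) (u : D) (f g : L) (x : Obj),
      Arch.edge (M.dom a) u = some (some f) →
      Arch.edge (M.dom b) u = some (some g) →
      I f α a = I g β b → I f α a ≠ TFVal.eps →
      x ∈ M.observe u ∩ (M.alter (M.dom a) ∪ M.alter (M.dom b)) →
      M.contents (Machine.run M.toMachine α) x =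
        M.contents (Machine.run M.toMachine β) x →
      M.contents (Machine.run M.toMachine (α ++ [a])) x =
        M.contents (Machine.run M.toMachine (β ++ [b])) x) :
    FTACompliant M.toMachine Arch I := by
  intro u α β htf
  have hrun : ∀ (γ : List A) (c : A),
      Machine.run M.toMachine (γ ++ [c]) = M.step (Machine.run M.toMachine γ) c := by
    intro γ c; simp [Machine.run]
  have hstep : ∀ (γ : List A) (c : A) (w : D) (x : Obj),
      inF Arch M.dom I γ c w = TFVal.eps → x ∈ M.observe w →
      M.contents (Machine.run M.toMachine (γ ++ [c])) x
        = M.contents (Machine.run M.toMachine γ) x := by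
    intro γ c w x hin hx
    by_cases hxa : x ∈ M.alter (M.dom c)
    · have hsome := hAOI (M.dom c) w ⟨x, hxa, hx⟩
      cases h : Arch.edge (M.dom c) w with
      | none => rw [h] at hsome; simp at hsome
      | some o =>
        cases o with
        | none => simp [inF, h] at hin
        | some f =>
          simp only [inF, h] at hin
          exact hI1 γ c w f x h hin ⟨hx, hxa⟩
    · rw [hrun]; exact (hRM3 c (Machine.run M.toMachine γ) x hxa).symm
  have key : ∀ n : ℕ, ∀ (w : D) (γ δ : List A), γ.length + δ.length = n →
      tf Arch M.dom I γ w = tf Arch M.dom I δ w →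
      ∀ x ∈ M.observe w,
        M.contents (Machine.run M.toMachine γ) x
          = M.contents (Machine.run M.toMachine δ) x := by
    intro n
    induction n using Nat.strong_induction_on with
    | _ n IH =>
      intro w γ δ hlen htf x hx
      rcases List.eq_nil_or_concat γ with rfl | ⟨γ', c, rfl⟩
      · rcases List.eq_nil_or_concat δ with rfl | ⟨δ', d, rfl⟩
        · rfl
        · simp only [List.concat_eq_append] at hlen htf ⊢
          rw [tf_concat] at htf
          by_cases hd : inF Arch M.dom I δ' d w = TFVal.eps
          · rw [hd, snoc'_eps] at htf
            rw [hstep δ' d w x hd hx]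
            refine IH (δ'.length) ?_ w [] δ' (by simp) htf x hx
            simp at hlen; omega
          · rw [snoc'_ne _ hd] at htf
            simp [tf, tfR] at htf
      · simp only [List.concat_eq_append] at hlen htf ⊢
        rw [tf_concat] at htf
        by_cases hc : inF Arch M.dom I γ' c w = TFVal.eps
        · rw [hc, snoc'_eps] at htf
          rw [hstep γ' c w x hc hx]
          refine IH (γ'.length + δ.length) ?_ w γ' δ rfl htf x hx
          simp at hlen; omega
        · rw [snoc'_ne _ hc] at htf
          rcases List.eq_nil_or_concat δ with rfl | ⟨δ', d, rfl⟩
          · simp [tf, tfR] at htf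
          · simp only [List.concat_eq_append] at hlen htf ⊢
            rw [tf_concat] at htf
            by_cases hd : inF Arch M.dom I δ' d w = TFVal.eps
            · rw [hd, snoc'_eps] at htf
              rw [hstep δ' d w x hd hx]
              refine IH ((γ'.length + 1) + δ'.length) ?_ w (γ' ++ [c]) δ' (by simp) ?_ x hx
              · simp at hlen; omega
              · rw [tf_concat, snoc'_ne _ hc]; exact htf
            · rw [snoc'_ne _ hd] at htf
              obtain ⟨htf', hxy⟩ := List.append_inj' htf (by simp)
              simp only [List.cons.injEq, and_true] at hxy
              have hlt : γ'.length + δ'.length < n := by simp at hlen; omega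
              have hIHw := IH _ hlt w γ' δ' rfl htf'
              cases h1 : Arch.edge (M.dom c) w with
              | none => exact absurd (by simp [inF, h1]) hc
              | some o1 =>
                cases h2 : Arch.edge (M.dom d) w with
                | none => exact absurd (by simp [inF, h2]) hd
                | some o2 =>
                  simp only [inF, h1] at hxy hc
                  simp only [inF, h2] at hxy hd
                  cases o1 with
                  | none =>
                    cases o2 with
                    | none =>
                      injection hxy with htfd hcd
                      subst hcd
                      by_cases hxa : x ∈ M.alter (M.dom c)
                      · rw [hrun, hrun]
                        exact hRM2 c _ _ x hxa
                          (IH _ hlt (M.dom c) γ' δ' rfl htfd) (hIHw x hx)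
                      · rw [hrun, hrun, ← hRM3 c _ x hxa, ← hRM3 c _ x hxa]
                        exact hIHw x hx
                    | some g =>
                      exact absurd hxy.symm
                        (hsnc (M.dom d) (M.dom c) w g h2 h1 d c rfl rfl δ' γ')
                  | some f =>
                    cases o2 with
                    | none =>
                      exact absurd hxy
                        (hsnc (M.dom c) (M.dom d) w f h1 h2 c d rfl rfl γ' δ')
                    | some g =>
                      by_cases hxa : x ∈ M.alter (M.dom c) ∪ M.alter (M.dom d)
                      · exact hI2 γ' δ' c d w f g x h1 h2 hxy hc ⟨hx, hxa⟩ (hIHw x hx)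
                      · simp only [Set.mem_union, not_or] at hxa
                        rw [hrun, hrun, ← hRM3 c _ x hxa.1, ← hRM3 d _ x hxa.2]
                        exact hIHw x hx
  exact hRM1 u _ _ (key (α.length + β.length) u α β rfl htf)
end
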